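/- Assume each p_i takes values almost surely in the finite set A. Let α ∈ (0,1) and define the [A-DBH-SD] critical values by τ_k = max{t ∈ A : F_i(t) < 1 for all i, and for every subset S ⊆ {1,…,m} with |S| = m−k+1, Σ_{i∈S} F_i(t)/(1−F_i(t)) ≤ αk} for 1 ≤ k ≤ m (these sets contain 0, hence are nonempty, and the resulting sequence is nondecreasing). Then the false discovery rate of the step-down procedure SD(τ) satisfies FDR(SD(τ)) ≤ α. -/

import Mathlib

open MeasureTheory ProbabilityTheory Finset

/-- Number of rejections of the step-up procedure with critical values `τ 1, …, τ m`
(convention `τ 0 = 0`): the largest `k ∈ {0, …, m}` such that at least `k` of the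
p-values are `≤ τ k`. -/
noncomputable def numRejSU (m : ℕ) (τ : ℕ → ℝ) (q : Fin m → ℝ) : ℕ :=
  sSup {k | k ≤ m ∧ k ≤ (univ.filter (fun j => q j ≤ τ k)).card}

/-- Rejection set of the step-up procedure. -/
noncomputable def rejSU (m : ℕ) (τ : ℕ → ℝ) (q : Fin m → ℝ) : Finset (Fin m) :=
  univ.filter (fun i => q i ≤ τ (numRejSU m τ q))

/-- Number of rejections of the step-down procedure with critical values `τ 1, …, τ m`
(convention `τ 0 = 0`). -/
noncomputable def numRejSD (m : ℕ) (τ : ℕ → ℝ) (q : Fin m → ℝ) : ℕ :=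
  sSup {k | k ≤ m ∧ ∀ k' ≤ k, k' ≤ (univ.filter (fun j => q j ≤ τ k')).card}

/-- Rejection set of the step-down procedure. -/
noncomputable def rejSD (m : ℕ) (τ : ℕ → ℝ) (q : Fin m → ℝ) : Finset (Fin m) :=
  univ.filter (fun i => q i ≤ τ (numRejSD m τ q))

/-- False discovery proportion of a rejection set `R` w.r.t. the set of true nulls `H0`. -/
noncomputable def FDP (m : ℕ) (H0 R : Finset (Fin m)) : ℝ :=
  ((R ∩ H0).card : ℝ) / max (R.card : ℝ) 1

set_option linter.unusedSectionVars false

namespace FdrAux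

variable {m : ℕ} (τ : ℕ → ℝ) (q : Fin m → ℝ)

/-- number of p-values `≤ τ k`. -/
noncomputable def cnt (k : ℕ) : ℕ := (univ.filter (fun l => q l ≤ τ k)).card

/-- number of p-values other than `j` that are `≤ τ k`. -/
noncomputable def cntm (j : Fin m) (k : ℕ) : ℕ :=
  ((univ.erase j).filter (fun l => q l ≤ τ k)).card

/-- the first level at which the leave-`j`-out counts stall. -/
noncomputable def lam (j : Fin m) : ℕ := sInf {k | 1 ≤ k ∧ cntm τ q j k < k}

variable {τ q}

lemma cnt_eq (j : Fin m) (k : ℕ) :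
    cnt τ q k = cntm τ q j k + if q j ≤ τ k then 1 else 0 := by
  classical
  unfold cnt cntm
  rw [Finset.card_filter, Finset.card_filter, ← Finset.add_sum_erase _ _ (Finset.mem_univ j),
    add_comm]

lemma cnt_mono (hτm : ∀ ⦃a b : ℕ⦄, a ≤ b → b ≤ m → τ a ≤ τ b) {k k' : ℕ}
    (h : k ≤ k') (h' : k' ≤ m) : cnt τ q k ≤ cnt τ q k' := by
  apply Finset.card_le_card
  intro l hl
  simp only [Finset.mem_filter] at hl ⊢
  exact ⟨hl.1, le_trans hl.2 (hτm h h')⟩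

lemma cntm_mono (hτm : ∀ ⦃a b : ℕ⦄, a ≤ b → b ≤ m → τ a ≤ τ b) (j : Fin m) {k k' : ℕ}
    (h : k ≤ k') (h' : k' ≤ m) : cntm τ q j k ≤ cntm τ q j k' := by
  apply Finset.card_le_card
  intro l hl
  simp only [Finset.mem_filter] at hl ⊢
  exact ⟨hl.1, le_trans hl.2 (hτm h h')⟩

lemma cntm_le (j : Fin m) (k : ℕ) : cntm τ q j k ≤ m - 1 := by
  calc cntm τ q j k ≤ (univ.erase j).card := Finset.card_le_card (Finset.filter_subset _ _)
  _ = m - 1 := by rw [Finset.card_erase_of_mem (Finset.mem_univ j)]; simp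

lemma lam_spec (hm : 1 ≤ m) (j : Fin m) :
    (1 ≤ lam τ q j ∧ cntm τ q j (lam τ q j) < lam τ q j) ∧ lam τ q j ≤ m := by
  have hmem : m ∈ {k | 1 ≤ k ∧ cntm τ q j k < k} := by
    refine ⟨hm, lt_of_le_of_lt (cntm_le j m) ?_⟩
    omega
  exact ⟨Nat.sInf_mem ⟨m, hmem⟩, Nat.sInf_le hmem⟩

lemma lam_min (j : Fin m) {k : ℕ} (h1 : 1 ≤ k) (h2 : k < lam τ q j) :
    k ≤ cntm τ q j k := by
  by_contra h
  have hk : k ∈ {k | 1 ≤ k ∧ cntm τ q j k < k} := ⟨h1, by omega⟩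
  unfold lam at h2
  exact absurd (Nat.sInf_le hk) (by omega)

/-- `numRejSD` is the greatest element of its defining set. -/
lemma numRejSD_isGreatest :
    IsGreatest {k | k ≤ m ∧ ∀ k' ≤ k, k' ≤ cnt τ q k'} (numRejSD m τ q) := by
  have h0 : (0 : ℕ) ∈ {k | k ≤ m ∧ ∀ k' ≤ k, k' ≤ cnt τ q k'} := by
    refine ⟨Nat.zero_le m, fun k' hk' => by omega⟩
  have hbdd : BddAbove {k | k ≤ m ∧ ∀ k' ≤ k, k' ≤ cnt τ q k'} := ⟨m, fun x hx => hx.1⟩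
  constructor
  · exact Nat.sSup_mem ⟨0, h0⟩ hbdd
  · exact fun k hk => le_csSup hbdd hk

section Main

variable (hm : 1 ≤ m) (hτm : ∀ ⦃a b : ℕ⦄, a ≤ b → b ≤ m → τ a ≤ τ b)

include hm hτm

/-- if `q j ≤ τ (lam j)`, the step-down count reaches `lam j`. -/
lemma lam_le_numRejSD (j : Fin m) (h : q j ≤ τ (lam τ q j)) :
    lam τ q j ≤ numRejSD m τ q := by
  obtain ⟨⟨hl1, hl2⟩, hlm⟩ := lam_spec hm (τ := τ) (q := q) j
  apply (numRejSD_isGreatest (τ := τ) (q := q)).2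
  refine ⟨hlm, fun k' hk' => ?_⟩
  rcases Nat.eq_zero_or_pos k' with rfl | hk'pos
  · omega
  rcases eq_or_lt_of_le hk' with rfl | hlt
  · -- k' = lam
    have hcm : lam τ q j - 1 ≤ cntm τ q j (lam τ q j) := by
      rcases Nat.lt_or_ge 1 (lam τ q j) with h1 | h1
      · exact le_trans (lam_min j (by omega) (by omega))
          (cntm_mono hτm j (by omega) hlm)
      · omega
    have := cnt_eq (τ := τ) (q := q) j (lam τ q j)
    rw [if_pos h] at this
    omega
  · have h1 := lam_min (τ := τ) (q := q) j hk'pos hlt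
    have := cnt_eq (τ := τ) (q := q) j k'
    omega

/-- if `q j > τ (lam j)`, the step-down count is exactly `lam j - 1`. -/
lemma numRejSD_eq_of_gt (j : Fin m) (h : ¬ q j ≤ τ (lam τ q j)) :
    numRejSD m τ q = lam τ q j - 1 := by
  obtain ⟨⟨hl1, hl2⟩, hlm⟩ := lam_spec hm (τ := τ) (q := q) j
  have hcntlam : cnt τ q (lam τ q j) < lam τ q j := by
    have := cnt_eq (τ := τ) (q := q) j (lam τ q j)
    rw [if_neg h] at this
    omega
  have hG := numRejSD_isGreatest (τ := τ) (q := q)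
  apply le_antisymm
  · by_contra hcon
    push_neg at hcon
    have hmem := hG.1
    have := hmem.2 (lam τ q j) (by omega)
    omega
  · apply hG.2
    refine ⟨by omega, fun k' hk' => ?_⟩
    rcases Nat.eq_zero_or_pos k' with rfl | hk'pos
    · omega
    have h1 := lam_min (τ := τ) (q := q) j hk'pos (by omega)
    have := cnt_eq (τ := τ) (q := q) j k'
    omega

/-- Rejection identity: `j` is rejected iff `q j ≤ τ (lam j)`. -/
lemma mem_rejSD_iff (hτ0 : τ 0 = 0) (hτ1 : 0 ≤ τ 1) (j : Fin m) :
    j ∈ rejSD m τ q ↔ q j ≤ τ (lam τ q j) := by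
  obtain ⟨⟨hl1, hl2⟩, hlm⟩ := lam_spec hm (τ := τ) (q := q) j
  simp only [rejSD, Finset.mem_filter, Finset.mem_univ, true_and]
  constructor
  · intro hrej
    by_contra h
    have hk := numRejSD_eq_of_gt hm hτm j h
    -- τ (numRejSD) ≤ τ (lam j)
    have hle : τ (numRejSD m τ q) ≤ τ (lam τ q j) := by
      rcases Nat.lt_or_ge 1 (lam τ q j) with h1 | h1
      · rw [hk]; exact hτm (by omega) hlm
      · have : lam τ q j = 1 := by omega
        rw [hk, this, hτ0]
        simpa using hτ1
    exact h (le_trans hrej hle)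
  · intro h
    have hk := lam_le_numRejSD hm hτm j h
    have hkm : numRejSD m τ q ≤ m := (numRejSD_isGreatest (τ := τ) (q := q)).1.1
    exact le_trans h (hτm hk hkm)

omit hm hτm in
/-- the number of rejections is at least `numRejSD`. -/
lemma numRejSD_le_card : numRejSD m τ q ≤ (rejSD m τ q).card := by
  have hmem := (numRejSD_isGreatest (τ := τ) (q := q)).1
  exact hmem.2 _ le_rfl

omit hτm in
/-- characterization of `lam` (for measurability). -/
lemma lam_eq_iff (j : Fin m) (ℓ : ℕ) :
    lam τ q j = ℓ ↔ (1 ≤ ℓ ∧ cntm τ q j ℓ < ℓ) ∧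
      ∀ k < ℓ, ¬ (1 ≤ k ∧ cntm τ q j k < k) := by
  have hne : {k | 1 ≤ k ∧ cntm τ q j k < k}.Nonempty :=
    ⟨m, hm, lt_of_le_of_lt (cntm_le j m) (by omega)⟩
  constructor
  · rintro rfl
    exact ⟨Nat.sInf_mem hne, fun k hk => Nat.notMem_of_lt_sInf hk⟩
  · rintro ⟨hmem, hmin⟩
    refine le_antisymm (Nat.sInf_le hmem) (le_of_not_gt fun h => hmin _ h (Nat.sInf_mem hne))

/-- Core pointwise bound A : the FDP is at most the λ-weighted rejection sum. -/
lemma coreA (hτ0 : τ 0 = 0) (hτ1 : 0 ≤ τ 1) (H0 : Finset (Fin m)) :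
    FDP m H0 (rejSD m τ q) ≤
      ∑ j ∈ H0, ∑ ℓ ∈ Finset.Icc 1 m,
        (if lam τ q j = ℓ ∧ q j ≤ τ ℓ then ((ℓ : ℝ))⁻¹ else 0) := by
  classical
  set R := rejSD m τ q with hR
  have hcard : ((R ∩ H0).card : ℝ) = ∑ j ∈ H0, (if j ∈ R then (1:ℝ) else 0) := by
    rw [Finset.inter_comm, ← Finset.filter_mem_eq_inter, Finset.card_filter]
    push_cast
    rfl
  have hFDP : FDP m H0 R = ∑ j ∈ H0, (if j ∈ R then (1:ℝ) else 0) / max (R.card : ℝ) 1 := by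
    rw [FDP, hcard, Finset.sum_div]
  rw [hFDP]
  apply Finset.sum_le_sum
  intro j hj
  obtain ⟨⟨hl1, hl2⟩, hlm⟩ := lam_spec hm (τ := τ) (q := q) j
  have hinner : ∑ ℓ ∈ Finset.Icc 1 m,
      (if lam τ q j = ℓ ∧ q j ≤ τ ℓ then ((ℓ : ℝ))⁻¹ else 0)
      = (if q j ≤ τ (lam τ q j) then ((lam τ q j : ℝ))⁻¹ else 0) := by
    rw [Finset.sum_eq_single (lam τ q j)]
    · by_cases h : q j ≤ τ (lam τ q j)
      · rw [if_pos ⟨rfl, h⟩, if_pos h]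
      · rw [if_neg (by tauto), if_neg h]
    · intro ℓ _ hne
      rw [if_neg (by tauto)]
    · intro hnot
      exact absurd (Finset.mem_Icc.2 ⟨hl1, hlm⟩) hnot
  rw [hinner]
  by_cases hrej : j ∈ R
  · have hq : q j ≤ τ (lam τ q j) := (mem_rejSD_iff hm hτm hτ0 hτ1 j).1 hrej
    rw [if_pos hrej, if_pos hq]
    have hlelam : (lam τ q j : ℝ) ≤ max (R.card : ℝ) 1 := by
      have h1 : lam τ q j ≤ numRejSD m τ q := lam_le_numRejSD hm hτm j hq
      have h2 : numRejSD m τ q ≤ R.card := numRejSD_le_card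
      have : (lam τ q j : ℝ) ≤ (R.card : ℝ) := by exact_mod_cast le_trans h1 h2
      exact le_trans this (le_max_left _ _)
    rw [div_eq_mul_inv, one_mul]
    apply inv_anti₀
    · exact_mod_cast hl1
    · exact hlelam
  · rw [if_neg hrej]
    rw [zero_div]
    positivity

/-- Core pointwise bound B : the g-weighted non-rejection sum is at most `α`. -/
lemma coreB (α : ℝ) (hα : 0 ≤ α) (g : Fin m → ℕ → ℝ)
    (hg0 : ∀ j ℓ, 1 ≤ ℓ → ℓ ≤ m → 0 ≤ g j ℓ)
    (hcon : ∀ ℓ, 1 ≤ ℓ → ℓ ≤ m → ∀ S : Finset (Fin m), S.card = m - ℓ + 1 →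
      ∑ j ∈ S, g j ℓ ≤ α * ℓ) (H0 : Finset (Fin m)) :
    ∑ j ∈ H0, ∑ ℓ ∈ Finset.Icc 1 m,
      (if lam τ q j = ℓ ∧ ¬ q j ≤ τ ℓ then g j ℓ / ℓ else 0) ≤ α := by
  classical
  set N := numRejSD m τ q with hN
  have hinner : ∀ j ∈ H0, ∑ ℓ ∈ Finset.Icc 1 m,
      (if lam τ q j = ℓ ∧ ¬ q j ≤ τ ℓ then g j ℓ / ℓ else 0)
      = (if ¬ q j ≤ τ (lam τ q j) then g j (lam τ q j) / (lam τ q j) else 0) := by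
    intro j _
    obtain ⟨⟨hl1, hl2⟩, hlm⟩ := lam_spec hm (τ := τ) (q := q) j
    rw [Finset.sum_eq_single (lam τ q j)]
    · by_cases h : q j ≤ τ (lam τ q j)
      · rw [if_neg (by tauto), if_neg (by tauto)]
      · rw [if_pos ⟨rfl, h⟩, if_pos h]
    · intro ℓ _ hne
      rw [if_neg (by tauto)]
    · intro hnot
      exact absurd (Finset.mem_Icc.2 ⟨hl1, hlm⟩) hnot
  rw [Finset.sum_congr rfl hinner, ← Finset.sum_filter]
  set J := H0.filter (fun j => ¬ q j ≤ τ (lam τ q j)) with hJ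
  rcases Finset.eq_empty_or_nonempty J with hJe | ⟨j₀, hj₀⟩
  · rw [hJe]
    simpa using hα
  have hlamJ : ∀ j ∈ J, lam τ q j = N + 1 := by
    intro j hjJ
    have hjq : ¬ q j ≤ τ (lam τ q j) := (Finset.mem_filter.1 hjJ).2
    obtain ⟨⟨hl1, _⟩, _⟩ := lam_spec hm (τ := τ) (q := q) j
    have := numRejSD_eq_of_gt hm hτm j hjq
    omega
  have hNm : N + 1 ≤ m := by
    have := (lam_spec hm (τ := τ) (q := q) j₀).2
    rw [hlamJ j₀ hj₀] at this
    exact this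
  have hsum : ∑ j ∈ J, g j (lam τ q j) / (lam τ q j) = ∑ j ∈ J, g j (N+1) / (N+1) := by
    apply Finset.sum_congr rfl
    intro j hjJ
    rw [hlamJ j hjJ]
    norm_cast
  rw [hsum]
  -- cardinality bound on J
  have hJsub : J ⊆ univ.filter (fun l => ¬ q l ≤ τ (N + 1)) := by
    intro j hjJ
    have hjq : ¬ q j ≤ τ (lam τ q j) := (Finset.mem_filter.1 hjJ).2
    rw [hlamJ j hjJ] at hjq
    exact Finset.mem_filter.2 ⟨Finset.mem_univ j, hjq⟩
  have hcntN : N ≤ cnt τ q (N + 1) := by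
    have h1 : N ≤ cnt τ q N := (numRejSD_isGreatest (τ := τ) (q := q)).1.2 N le_rfl
    exact le_trans h1 (cnt_mono hτm (Nat.le_succ N) hNm)
  have hJcard : J.card ≤ m - (N + 1) + 1 := by
    have h1 : (univ.filter (fun l => ¬ q l ≤ τ (N + 1))).card = m - cnt τ q (N + 1) := by
      rw [Finset.filter_not, Finset.card_sdiff_of_subset (Finset.filter_subset _ _)]
      simp [cnt]
    have h2 := Finset.card_le_card hJsub
    omega
  obtain ⟨S, hJS, -, hScard⟩ := Finset.exists_subsuperset_card_eq (Finset.subset_univ J)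
    hJcard (by simp; omega)
  have hsb : ∑ j ∈ J, g j (N+1) ≤ α * ((N:ℝ)+1) := by
    have hc := hcon (N+1) (by omega) hNm S hScard
    push_cast at hc
    exact le_trans (Finset.sum_le_sum_of_subset_of_nonneg hJS
      (fun i _ _ => hg0 i (N+1) (by omega) hNm)) hc
  rw [← Finset.sum_div]
  rw [div_le_iff₀ (by positivity)]
  exact hsb

end Main

end FdrAux

/-- the adaptive [A-DBH-SD] procedure controls the FDR at level `α`. -/
theorem fdr_A_DBH_SD_le_alpha
    {Ω : Type*} [MeasurableSpace Ω] (P : Measure Ω) [IsProbabilityMeasure P]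
    (m : ℕ) (hm : 1 ≤ m)
    (p : Fin m → Ω → ℝ) (hmeas : ∀ i, Measurable (p i))
    (hp01 : ∀ i ω, p i ω ∈ Set.Icc (0 : ℝ) 1)
    (hindep : iIndepFun p P)
    (H0 : Finset (Fin m))
    (F : Fin m → ℝ → ℝ)
    (hFmono : ∀ i, MonotoneOn (F i) (Set.Icc 0 1))
    (hFrange : ∀ i, ∀ t ∈ Set.Icc (0 : ℝ) 1, F i t ∈ Set.Icc (0 : ℝ) 1)
    (hF0 : ∀ i, F i 0 = 0) (hF1 : ∀ i, F i 1 = 1)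
    (hnull : ∀ i ∈ H0, ∀ t ∈ Set.Icc (0 : ℝ) 1,
      P {ω | p i ω ≤ t} ≤ ENNReal.ofReal (F i t))
    (A : Finset ℝ) (hA0 : (0 : ℝ) ∈ A) (hA : ∀ t ∈ A, t ∈ Set.Icc (0 : ℝ) 1)
    (hpA : ∀ i, ∀ᵐ ω ∂P, p i ω ∈ A)
    (α : ℝ) (hα : α ∈ Set.Ioo (0 : ℝ) 1)
    (τ : ℕ → ℝ) (hτ0 : τ 0 = 0)
    (hτk : ∀ k, 1 ≤ k → k ≤ m → IsGreatest {t : ℝ | t ∈ A ∧ (∀ i, F i t < 1) ∧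
      ∀ S : Finset (Fin m), S.card = m - k + 1 →
        ∑ i ∈ S, F i t / (1 - F i t) ≤ α * k} (τ k))
    :
    ∫ ω, FDP m H0 (rejSD m τ (fun j => p j ω)) ∂P ≤ α := by
  classical
  have hα0 : (0:ℝ) ≤ α := le_of_lt hα.1
  -- 0 belongs to every constraint set
  have hmem0 : ∀ k : ℕ, 1 ≤ k → k ≤ m → (0:ℝ) ∈ {t : ℝ | t ∈ A ∧ (∀ i, F i t < 1) ∧
      ∀ S : Finset (Fin m), S.card = m - k + 1 →
        ∑ i ∈ S, F i t / (1 - F i t) ≤ α * k} := by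
    intro k hk1 hkm
    refine ⟨hA0, fun i => by rw [hF0 i]; norm_num, fun S hS => ?_⟩
    have hz : ∀ i ∈ S, F i 0 / (1 - F i 0) = 0 := fun i _ => by rw [hF0 i]; norm_num
    rw [Finset.sum_congr rfl hz, Finset.sum_const, smul_zero]
    positivity
  have hτmem : ∀ k : ℕ, 1 ≤ k → k ≤ m → (τ k ∈ A ∧ (∀ i, F i (τ k) < 1) ∧
      ∀ S : Finset (Fin m), S.card = m - k + 1 →
        ∑ i ∈ S, F i (τ k) / (1 - F i (τ k)) ≤ α * k) :=
    fun k h1 h2 => (hτk k h1 h2).1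
  have hτnonneg : ∀ k : ℕ, k ≤ m → 0 ≤ τ k := by
    intro k hk
    rcases Nat.eq_zero_or_pos k with rfl | h
    · rw [hτ0]
    · exact (hτk k h hk).2 (hmem0 k h hk)
  have hτIcc : ∀ k : ℕ, 1 ≤ k → k ≤ m → τ k ∈ Set.Icc (0:ℝ) 1 :=
    fun k h1 h2 => hA _ ((hτmem k h1 h2).1)
  have hF_lt : ∀ k : ℕ, 1 ≤ k → k ≤ m → ∀ i, F i (τ k) < 1 :=
    fun k h1 h2 => (hτmem k h1 h2).2.1
  have hF_nonneg : ∀ k : ℕ, 1 ≤ k → k ≤ m → ∀ i, 0 ≤ F i (τ k) :=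
    fun k h1 h2 i => (hFrange i _ (hτIcc k h1 h2)).1
  have hτm : ∀ ⦃a b : ℕ⦄, a ≤ b → b ≤ m → τ a ≤ τ b := by
    intro a b hab hbm
    rcases Nat.eq_zero_or_pos b with rfl | hb
    · have : a = 0 := by omega
      subst this; exact le_refl _
    rcases Nat.eq_zero_or_pos a with rfl | ha
    · rw [hτ0]; exact hτnonneg b hbm
    apply (hτk b hb hbm).2
    obtain ⟨hτA, hτF, hτS⟩ := hτmem a ha (le_trans hab hbm)
    refine ⟨hτA, hτF, fun S hS => ?_⟩
    have ham : a ≤ m := le_trans hab hbm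
    obtain ⟨S', hSS', -, hS'⟩ := Finset.exists_subsuperset_card_eq (Finset.subset_univ S)
      (by omega : S.card ≤ m - a + 1) (by simp; omega)
    have hterm : ∀ i ∈ S', 0 ≤ F i (τ a) / (1 - F i (τ a)) := by
      intro i _
      have h1 := hF_nonneg a ha ham i
      have h2 := hF_lt a ha ham i
      have : 0 < 1 - F i (τ a) := by linarith
      positivity
    calc ∑ i ∈ S, F i (τ a) / (1 - F i (τ a))
        ≤ ∑ i ∈ S', F i (τ a) / (1 - F i (τ a)) :=
          Finset.sum_le_sum_of_subset_of_nonneg hSS' (fun i hi _ => hterm i hi)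
      _ ≤ α * a := hτS S' hS'
      _ ≤ α * b := by
          apply mul_le_mul_of_nonneg_left _ hα0
          exact_mod_cast hab
  -- the odds ratios
  set gR : Fin m → ℕ → ℝ := fun j ℓ => F j (τ ℓ) / (1 - F j (τ ℓ)) with hgRdef
  have hgR0 : ∀ (j : Fin m) (ℓ : ℕ), 1 ≤ ℓ → ℓ ≤ m → 0 ≤ gR j ℓ := by
    intro j ℓ h1 h2
    have ha := hF_nonneg ℓ h1 h2 j
    have hb := hF_lt ℓ h1 h2 j
    have : 0 < 1 - F j (τ ℓ) := by linarith
    positivity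
  have hcon : ∀ ℓ : ℕ, 1 ≤ ℓ → ℓ ≤ m → ∀ S : Finset (Fin m), S.card = m - ℓ + 1 →
      ∑ j ∈ S, gR j ℓ ≤ α * ℓ := fun ℓ h1 h2 => (hτmem ℓ h1 h2).2.2
  -- events
  set lamf : Fin m → Ω → ℕ := fun j ω => FdrAux.lam τ (fun l => p l ω) j with hlamf
  set Ee : Fin m → ℕ → Set Ω := fun j ℓ => {ω | lamf j ω = ℓ} with hEe
  set Be : Fin m → ℕ → Set Ω := fun j ℓ => {ω | p j ω ≤ τ ℓ} with hBe
  have hB_meas : ∀ (j : Fin m) (ℓ : ℕ), MeasurableSet (Be j ℓ) :=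
    fun j ℓ => (hmeas j) measurableSet_Iic
  -- independence and measurability of the events
  have hkey : ∀ (j : Fin m) (ℓ : ℕ), MeasurableSet (Ee j ℓ) ∧
      P (Ee j ℓ ∩ Be j ℓ) = P (Ee j ℓ) * P (Be j ℓ) ∧
      P (Ee j ℓ ∩ (Be j ℓ)ᶜ) = P (Ee j ℓ) * P ((Be j ℓ)ᶜ) := by
    intro j ℓ
    set S : Finset (Fin m) := univ.erase j with hS
    have hdisj : Disjoint S ({j} : Finset (Fin m)) := by
      simp [hS]
    have hXY := hindep.indepFun_finset S {j} hdisj hmeas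
    set X : Ω → (S → ℝ) := fun ω (i : S) => p i ω with hX
    set Y : Ω → (({j} : Finset (Fin m)) → ℝ) := fun ω (i : ({j} : Finset (Fin m))) => p i ω
      with hY
    have hXmeas : Measurable X := measurable_pi_lambda _ (fun i => hmeas i)
    set MB : Set (({j} : Finset (Fin m)) → ℝ) :=
      {y | y ⟨j, Finset.mem_singleton_self j⟩ ≤ τ ℓ} with hMB
    have hMBmeas : MeasurableSet MB :=
      measurableSet_le (measurable_pi_apply _) measurable_const
    set cntS : (S → ℝ) → ℕ → ℕ := fun x k => ∑ i : S, if x i ≤ τ k then 1 else 0 with hcntS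
    have hcntS_meas : ∀ k, Measurable (fun x => cntS x k) := fun k =>
      Finset.measurable_sum _ (fun i _ => Measurable.ite
        (measurableSet_le (measurable_pi_apply _) measurable_const)
        measurable_const measurable_const)
    set ME : Set (S → ℝ) := {x | (1 ≤ ℓ ∧ cntS x ℓ < ℓ) ∧
      ∀ k < ℓ, ¬ (1 ≤ k ∧ cntS x k < k)} with hME
    have hMEmeas : MeasurableSet ME := by
      have h1 : MeasurableSet {x : S → ℝ | 1 ≤ ℓ ∧ cntS x ℓ < ℓ} := by
        rcases Nat.lt_or_ge ℓ 1 with h | h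
        · convert MeasurableSet.empty
          ext x; simp; omega
        · have : {x : S → ℝ | 1 ≤ ℓ ∧ cntS x ℓ < ℓ}
              = (fun x => cntS x ℓ) ⁻¹' {n | n < ℓ} := by
            ext x; simp [h]
          rw [this]
          exact (hcntS_meas ℓ) (by trivial)
      have h2 : MeasurableSet {x : S → ℝ | ∀ k < ℓ, ¬ (1 ≤ k ∧ cntS x k < k)} := by
        have : {x : S → ℝ | ∀ k < ℓ, ¬ (1 ≤ k ∧ cntS x k < k)}
            = ⋂ k ∈ Set.Iio ℓ, {x : S → ℝ | ¬ (1 ≤ k ∧ cntS x k < k)} := by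
          ext x; simp
        rw [this]
        refine MeasurableSet.biInter (Set.to_countable _) (fun k _ => ?_)
        have : {x : S → ℝ | ¬ (1 ≤ k ∧ cntS x k < k)}
            = ((fun x => cntS x k) ⁻¹' {n | 1 ≤ k ∧ n < k})ᶜ := by
          ext x
          simp only [Set.mem_setOf_eq, Set.mem_compl_iff, Set.mem_preimage]
        rw [this]
        exact ((hcntS_meas k) (by trivial)).compl
      have : ME = {x : S → ℝ | 1 ≤ ℓ ∧ cntS x ℓ < ℓ}
          ∩ {x : S → ℝ | ∀ k < ℓ, ¬ (1 ≤ k ∧ cntS x k < k)} := by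
        ext x
        simp only [hME, Set.mem_setOf_eq, Set.mem_inter_iff]
      rw [this]
      exact h1.inter h2
    have hcnt_eq : ∀ (ω : Ω) (k : ℕ),
        FdrAux.cntm τ (fun l => p l ω) j k = cntS (X ω) k := by
      intro ω k
      rw [FdrAux.cntm, Finset.card_filter]
      exact (Finset.sum_coe_sort S _).symm
    have hEpre : Ee j ℓ = X ⁻¹' ME := by
      ext ω
      simp only [hEe, Set.mem_setOf_eq, Set.mem_preimage, hME, hlamf,
        FdrAux.lam_eq_iff hm, hcnt_eq]
    have hBpre : Be j ℓ = Y ⁻¹' MB := rfl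
    have hBcpre : (Be j ℓ)ᶜ = Y ⁻¹' MBᶜ := by
      rw [hBpre]; rfl
    refine ⟨hEpre ▸ hXmeas hMEmeas, ?_, ?_⟩
    · rw [hEpre, hBpre]
      exact hXY.measure_inter_preimage_eq_mul ME MB hMEmeas hMBmeas
    · rw [hEpre, hBcpre]
      exact hXY.measure_inter_preimage_eq_mul ME MBᶜ hMEmeas hMBmeas.compl
  have hE_meas : ∀ (j : Fin m) (ℓ : ℕ), MeasurableSet (Ee j ℓ) := fun j ℓ => (hkey j ℓ).1
  -- the two simple functions
  set Φ : Ω → ℝ := fun ω => ∑ j ∈ H0, ∑ ℓ ∈ Finset.Icc 1 m,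
    (if lamf j ω = ℓ ∧ p j ω ≤ τ ℓ then ((ℓ:ℝ))⁻¹ else 0) with hΦ
  set Ψ : Ω → ℝ := fun ω => ∑ j ∈ H0, ∑ ℓ ∈ Finset.Icc 1 m,
    (if lamf j ω = ℓ ∧ ¬ p j ω ≤ τ ℓ then gR j ℓ / ℓ else 0) with hΨ
  have hφind : ∀ (j : Fin m) (ℓ : ℕ),
      (fun ω => if lamf j ω = ℓ ∧ p j ω ≤ τ ℓ then ((ℓ:ℝ))⁻¹ else 0)
      = (Ee j ℓ ∩ Be j ℓ).indicator (fun _ => ((ℓ:ℝ))⁻¹) := by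
    intro j ℓ; funext ω
    rw [Set.indicator_apply]
    by_cases h : lamf j ω = ℓ ∧ p j ω ≤ τ ℓ
    · rw [if_pos h, if_pos (show ω ∈ Ee j ℓ ∩ Be j ℓ from ⟨h.1, h.2⟩)]
    · rw [if_neg h, if_neg (show ω ∉ Ee j ℓ ∩ Be j ℓ from fun hc => h ⟨hc.1, hc.2⟩)]
  have hψind : ∀ (j : Fin m) (ℓ : ℕ),
      (fun ω => if lamf j ω = ℓ ∧ ¬ p j ω ≤ τ ℓ then gR j ℓ / ℓ else 0)
      = (Ee j ℓ ∩ (Be j ℓ)ᶜ).indicator (fun _ => gR j ℓ / ℓ) := by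
    intro j ℓ; funext ω
    rw [Set.indicator_apply]
    by_cases h : lamf j ω = ℓ ∧ ¬ p j ω ≤ τ ℓ
    · rw [if_pos h, if_pos (show ω ∈ Ee j ℓ ∩ (Be j ℓ)ᶜ from ⟨h.1, h.2⟩)]
    · rw [if_neg h, if_neg (show ω ∉ Ee j ℓ ∩ (Be j ℓ)ᶜ from fun hc => h ⟨hc.1, hc.2⟩)]
  have hΦs_int : ∀ (j : Fin m) (ℓ : ℕ),
      Integrable ((Ee j ℓ ∩ Be j ℓ).indicator (fun _ => ((ℓ:ℝ))⁻¹)) P :=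
    fun j ℓ => (integrable_const _).indicator ((hE_meas j ℓ).inter (hB_meas j ℓ))
  have hΨs_int : ∀ (j : Fin m) (ℓ : ℕ),
      Integrable ((Ee j ℓ ∩ (Be j ℓ)ᶜ).indicator (fun _ => gR j ℓ / ℓ)) P :=
    fun j ℓ => (integrable_const _).indicator ((hE_meas j ℓ).inter (hB_meas j ℓ).compl)
  have hΦint : Integrable Φ P := by
    apply integrable_finset_sum
    intro j _
    apply integrable_finset_sum
    intro ℓ _
    exact (hφind j ℓ) ▸ hΦs_int j ℓ
  have hΨint : Integrable Ψ P := by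
    apply integrable_finset_sum
    intro j _
    apply integrable_finset_sum
    intro ℓ _
    exact (hψind j ℓ) ▸ hΨs_int j ℓ
  have hΦeq : ∫ ω, Φ ω ∂P = ∑ j ∈ H0, ∑ ℓ ∈ Finset.Icc 1 m,
      (P (Ee j ℓ ∩ Be j ℓ)).toReal * ((ℓ:ℝ))⁻¹ := by
    rw [integral_finset_sum _ (fun j _ => integrable_finset_sum _
      (fun ℓ _ => (hφind j ℓ) ▸ hΦs_int j ℓ))]
    refine Finset.sum_congr rfl (fun j _ => ?_)
    rw [integral_finset_sum _ (fun ℓ _ => (hφind j ℓ) ▸ hΦs_int j ℓ)]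
    refine Finset.sum_congr rfl (fun ℓ _ => ?_)
    rw [hφind j ℓ, integral_indicator_const _ ((hE_meas j ℓ).inter (hB_meas j ℓ))]
    rw [smul_eq_mul, measureReal_def, mul_comm]
  have hΨeq : ∫ ω, Ψ ω ∂P = ∑ j ∈ H0, ∑ ℓ ∈ Finset.Icc 1 m,
      (P (Ee j ℓ ∩ (Be j ℓ)ᶜ)).toReal * (gR j ℓ / ℓ) := by
    rw [integral_finset_sum _ (fun j _ => integrable_finset_sum _
      (fun ℓ _ => (hψind j ℓ) ▸ hΨs_int j ℓ))]
    refine Finset.sum_congr rfl (fun j _ => ?_)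
    rw [integral_finset_sum _ (fun ℓ _ => (hψind j ℓ) ▸ hΨs_int j ℓ)]
    refine Finset.sum_congr rfl (fun ℓ _ => ?_)
    rw [hψind j ℓ, integral_indicator_const _ ((hE_meas j ℓ).inter (hB_meas j ℓ).compl)]
    rw [smul_eq_mul, measureReal_def, mul_comm]
  -- the per-term inequality
  have hterm : ∀ j ∈ H0, ∀ ℓ ∈ Finset.Icc 1 m,
      (P (Ee j ℓ ∩ Be j ℓ)).toReal * ((ℓ:ℝ))⁻¹ ≤
      (P (Ee j ℓ ∩ (Be j ℓ)ᶜ)).toReal * (gR j ℓ / ℓ) := by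
    intro j hj ℓ hℓ
    rw [Finset.mem_Icc] at hℓ
    obtain ⟨h1, h2⟩ := hℓ
    have hF0' : 0 ≤ F j (τ ℓ) := hF_nonneg ℓ h1 h2 j
    have hF1' : F j (τ ℓ) < 1 := hF_lt ℓ h1 h2 j
    have hPB : P (Be j ℓ) ≤ ENNReal.ofReal (F j (τ ℓ)) := hnull j hj (τ ℓ) (hτIcc ℓ h1 h2)
    have hble : (P (Be j ℓ)).toReal ≤ F j (τ ℓ) := ENNReal.toReal_le_of_le_ofReal hF0' hPB
    have hbc : (P ((Be j ℓ)ᶜ)).toReal = 1 - (P (Be j ℓ)).toReal := by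
      rw [prob_compl_eq_one_sub (hB_meas j ℓ),
        ENNReal.toReal_sub_of_le prob_le_one ENNReal.one_ne_top, ENNReal.toReal_one]
    have hb0 : 0 ≤ (P (Be j ℓ)).toReal := ENNReal.toReal_nonneg
    have he0 : 0 ≤ (P (Ee j ℓ)).toReal := ENNReal.toReal_nonneg
    rw [(hkey j ℓ).2.1, (hkey j ℓ).2.2, ENNReal.toReal_mul, ENNReal.toReal_mul, hbc]
    set b := (P (Be j ℓ)).toReal
    set e := (P (Ee j ℓ)).toReal
    have hg0' : 0 ≤ gR j ℓ := hgR0 j ℓ h1 h2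
    have hkey2 : b ≤ (1 - b) * gR j ℓ := by
      have hne : (1 : ℝ) - F j (τ ℓ) ≠ 0 := by linarith
      have hgl : gR j ℓ * (1 - F j (τ ℓ)) = F j (τ ℓ) := by
        simp only [hgRdef]
        exact div_mul_cancel₀ _ hne
      calc b ≤ F j (τ ℓ) := hble
        _ = gR j ℓ * (1 - F j (τ ℓ)) := hgl.symm
        _ ≤ gR j ℓ * (1 - b) := mul_le_mul_of_nonneg_left (by linarith) hg0'
        _ = (1 - b) * gR j ℓ := mul_comm _ _
    have hl0 : (0:ℝ) < (ℓ:ℝ) := by exact_mod_cast Nat.lt_of_lt_of_le Nat.zero_lt_one h1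
    calc e * b * ((ℓ:ℝ))⁻¹ ≤ e * ((1 - b) * gR j ℓ) * ((ℓ:ℝ))⁻¹ := by
          apply mul_le_mul_of_nonneg_right (mul_le_mul_of_nonneg_left hkey2 he0)
          positivity
      _ = e * (1 - b) * (gR j ℓ / ℓ) := by ring
  -- assemble
  have hΦΨ : ∫ ω, Φ ω ∂P ≤ ∫ ω, Ψ ω ∂P := by
    rw [hΦeq, hΨeq]
    exact Finset.sum_le_sum (fun j hj => Finset.sum_le_sum (fun ℓ hℓ => hterm j hj ℓ hℓ))
  have hΨle : ∫ ω, Ψ ω ∂P ≤ α := by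
    have hpt : ∀ ω, Ψ ω ≤ α := fun ω =>
      FdrAux.coreB hm hτm α hα0 gR hgR0 hcon H0
    calc ∫ ω, Ψ ω ∂P ≤ ∫ _ω, α ∂P := integral_mono hΨint (integrable_const α) hpt
      _ = α := by simp
  have hFDPle : ∫ ω, FDP m H0 (rejSD m τ (fun j => p j ω)) ∂P ≤ ∫ ω, Φ ω ∂P := by
    apply integral_mono_of_nonneg
    · refine Filter.Eventually.of_forall (fun ω => ?_)
      unfold FDP
      positivity
    · exact hΦint
    · refine Filter.Eventually.of_forall (fun ω => ?_)
      exact FdrAux.coreA hm hτm hτ0 (hτnonneg 1 hm) H0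
  linarith
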